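/- arXiv:2508.00845 — 2 statements merged into one kernel-verified Lean document; each statement's English description precedes it below -/
import Mathlib

section
/- Let a, b, e be vectors in a complex inner product space H with ‖e‖ = 1, and let β ≥ 0. Then |⟨a,e⟩·⟨e,b⟩|² ≤ (1/2)·( ((2β+1)/(β+1))·‖a‖²‖b‖² + (1/(β+1))·|⟨a,b⟩|² ). -/
open scoped ComplexConjugate

lemma buzano_aux {H : Type*} [NormedAddCommGroup H] [InnerProductSpace ℂ H]
    (a b e : H) (he : ‖e‖ = 1) :
    ‖(inner ℂ a e : ℂ) * (inner ℂ e b : ℂ)‖ ≤ (‖a‖ * ‖b‖ + ‖(inner ℂ a b : ℂ)‖) / 2 := by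
  set u : H := ((2 : ℂ) * (inner ℂ e b : ℂ)) • e - b with hu
  have hnorm : ‖u‖ = ‖b‖ := by
    have h1 : ‖u‖ ^ 2 = ‖b‖ ^ 2 := by
      rw [hu, @norm_sub_sq ℂ, inner_smul_left, norm_smul]
      have h : (starRingEnd ℂ) ((2:ℂ) * (inner ℂ e b : ℂ)) * (inner ℂ e b : ℂ)
          = (2:ℂ) * ((‖(inner ℂ e b : ℂ)‖^2 : ℝ) : ℂ) := by
        rw [map_mul, mul_assoc, RCLike.conj_mul]
        norm_num [Complex.ext_iff]
      rw [h]
      simp [he, norm_mul, ← Complex.ofReal_pow]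
      ring
    nlinarith [norm_nonneg u, norm_nonneg b]
  have key : (inner ℂ a e : ℂ) * (inner ℂ e b : ℂ)
      = ((inner ℂ a b : ℂ) + (inner ℂ a u : ℂ)) / 2 := by
    rw [hu, inner_sub_right, inner_smul_right]
    ring
  rw [key]
  have h2 : ‖((inner ℂ a b : ℂ) + (inner ℂ a u : ℂ)) / 2‖
      = ‖(inner ℂ a b : ℂ) + (inner ℂ a u : ℂ)‖ / 2 := by
    rw [norm_div]; norm_num
  have h3 := norm_add_le (inner ℂ a b : ℂ) (inner ℂ a u : ℂ)
  have h4 := norm_inner_le_norm (𝕜 := ℂ) a u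
  rw [hnorm] at h4
  rw [h2]
  linarith

/-- Buzano-type inequality, squared form, with parameter `β ≥ 0`. -/
theorem buzano_beta_sq {H : Type*} [NormedAddCommGroup H] [InnerProductSpace ℂ H]
    (a b e : H) (he : ‖e‖ = 1) (β : ℝ) (hβ : 0 ≤ β) :
    ‖(inner ℂ a e : ℂ) * (inner ℂ e b : ℂ)‖ ^ 2 ≤
      1 / 2 * ((2 * β + 1) / (β + 1) * (‖a‖ ^ 2 * ‖b‖ ^ 2)
        + 1 / (β + 1) * ‖(inner ℂ a b : ℂ)‖ ^ 2) := by
  have hbz := buzano_aux a b e he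
  have hcs := norm_inner_le_norm (𝕜 := ℂ) a b
  have hL : (0:ℝ) ≤ ‖(inner ℂ a e : ℂ) * (inner ℂ e b : ℂ)‖ := norm_nonneg _
  have hC : (0:ℝ) ≤ ‖(inner ℂ a b : ℂ)‖ := norm_nonneg _
  have hβ1 : (0:ℝ) < β + 1 := by linarith
  have hsq : ‖(inner ℂ a e : ℂ) * (inner ℂ e b : ℂ)‖ ^ 2
      ≤ ((‖a‖ * ‖b‖ + ‖(inner ℂ a b : ℂ)‖) / 2) ^ 2 :=
    pow_le_pow_left₀ hL hbz 2
  have hAB : ‖a‖ ^ 2 * ‖b‖ ^ 2 = (‖a‖ * ‖b‖) ^ 2 := by ring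
  rw [hAB]
  set A : ℝ := ‖a‖ * ‖b‖ with hA
  set C : ℝ := ‖(inner ℂ a b : ℂ)‖ with hCdef
  have h2t : (2 * β + 1) / (β + 1) = 2 - 1 / (β + 1) := by
    field_simp; ring
  rw [h2t]
  have ht0 : 0 < 1 / (β + 1) := by positivity
  have ht1 : 1 / (β + 1) ≤ 1 := by
    rw [div_le_one hβ1]; linarith
  set t : ℝ := 1 / (β + 1) with htdef
  have h5 : 0 ≤ (1 - t) * (A ^ 2 - C ^ 2) := by
    apply mul_nonneg (by linarith)
    nlinarith
  nlinarith [sq_nonneg (A - C)]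
end

section
/- Let H be a complex Hilbert space, M ∈ B(H), α ∈ ℂ with α ≠ 0, and β ≥ 0. Set δ₁ = (2(β+1)·max{1, |α−1|²} + 2β) / (|α|²(β+1)) and δ₂ = 2 / (|α|²(β+1)). Then ω(M)⁴ ≤ (δ₁/4)·‖ |M|² + |M*|² ‖² + δ₂·ω(M²)². -/
open ContinuousLinearMap in
/-- The numerical radius `ω(A) = sup { |⟨A x, x⟩| : ‖x‖ = 1 }` of a bounded operator. -/
noncomputable def numRad {H : Type*} [NormedAddCommGroup H] [InnerProductSpace ℂ H]
    (A : H →L[ℂ] H) : ℝ :=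
  sSup {t : ℝ | ∃ x : H, ‖x‖ = 1 ∧ t = ‖(inner ℂ (A x) x : ℂ)‖}

/-- The absolute value `|A| = (A*A)^{1/2}` of a bounded operator, via the continuous
functional calculus. -/
noncomputable def absOp {E F : Type*} [NormedAddCommGroup E] [InnerProductSpace ℂ E]
    [CompleteSpace E] [NormedAddCommGroup F] [InnerProductSpace ℂ F] [CompleteSpace F]
    (A : E →L[ℂ] F) : E →L[ℂ] E :=
  cfc Real.sqrt ((ContinuousLinearMap.adjoint A).comp A)

open ContinuousLinearMap

section AuxNumRad

open ContinuousLinearMap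

variable {H : Type*} [NormedAddCommGroup H] [InnerProductSpace ℂ H] [CompleteSpace H]

private lemma numRad_bddAbove (A : H →L[ℂ] H) :
    BddAbove {t : ℝ | ∃ x : H, ‖x‖ = 1 ∧ t = ‖(inner ℂ (A x) x : ℂ)‖} := by
  refine ⟨‖A‖, ?_⟩
  rintro t ⟨x, hx, rfl⟩
  calc ‖(inner ℂ (A x) x : ℂ)‖ ≤ ‖A x‖ * ‖x‖ := norm_inner_le_norm _ _
    _ ≤ ‖A‖ * ‖x‖ * ‖x‖ := by
        have := A.le_opNorm x
        nlinarith [norm_nonneg x]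
    _ = ‖A‖ := by rw [hx]; ring

private lemma norm_inner_le_numRad (A : H →L[ℂ] H) {x : H} (hx : ‖x‖ = 1) :
    ‖(inner ℂ (A x) x : ℂ)‖ ≤ numRad A :=
  le_csSup (numRad_bddAbove A) ⟨x, hx, rfl⟩

private lemma numRad_le (A : H →L[ℂ] H) {C : ℝ} (hC : 0 ≤ C)
    (h : ∀ x : H, ‖x‖ = 1 → ‖(inner ℂ (A x) x : ℂ)‖ ≤ C) : numRad A ≤ C := by
  refine Real.sSup_le ?_ hC
  rintro t ⟨x, hx, rfl⟩
  exact h x hx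

private lemma numRad_nonneg (A : H →L[ℂ] H) : 0 ≤ numRad A := by
  apply Real.sSup_nonneg
  rintro t ⟨x, hx, rfl⟩
  exact norm_nonneg _

private lemma inner_app_left (M : H →L[ℂ] H) (u x : H) :
    (inner ℂ (M u) x : ℂ) = inner ℂ u ((adjoint M) x) := by
  conv_lhs => rw [← adjoint_adjoint M]
  exact adjoint_inner_left (adjoint M) x u

private lemma inner_sq_eq (M : H →L[ℂ] H) (x : H) :
    (inner ℂ ((M ^ 2) x) x : ℂ) = inner ℂ (M x) ((adjoint M) x) := by
  have h : (M ^ 2) x = M (M x) := by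
    rw [pow_two]; rfl
  rw [h]
  exact inner_app_left M (M x) x

private lemma sum_sq_le_opNorm (M : H →L[ℂ] H) {x : H} (hx : ‖x‖ = 1) :
    ‖M x‖ ^ 2 + ‖(adjoint M) x‖ ^ 2 ≤ ‖adjoint M * M + M * adjoint M‖ := by
  set N := adjoint M * M + M * adjoint M with hN
  have h1 : (inner ℂ (N x) x : ℂ) = (‖M x‖ : ℂ) ^ 2 + (‖(adjoint M) x‖ : ℂ) ^ 2 := by
    have hNx : N x = (adjoint M) (M x) + M ((adjoint M) x) := rfl
    rw [hNx, inner_add_left]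
    have e1 : (inner ℂ ((adjoint M) (M x)) x : ℂ) = inner ℂ (M x) (M x) :=
      adjoint_inner_left M x (M x)
    have e2 : (inner ℂ (M ((adjoint M) x)) x : ℂ) = inner ℂ ((adjoint M) x) ((adjoint M) x) :=
      inner_app_left M ((adjoint M) x) x
    rw [e1, e2, inner_self_eq_norm_sq_to_K, inner_self_eq_norm_sq_to_K]
    norm_cast
  have h2 : ((inner ℂ (N x) x : ℂ)).re = ‖M x‖ ^ 2 + ‖(adjoint M) x‖ ^ 2 := by
    rw [h1]
    simp [← Complex.ofReal_pow]
  calc ‖M x‖ ^ 2 + ‖(adjoint M) x‖ ^ 2 = ((inner ℂ (N x) x : ℂ)).re := h2.symm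
    _ ≤ ‖(inner ℂ (N x) x : ℂ)‖ := Complex.re_le_norm _
    _ ≤ ‖N x‖ * ‖x‖ := norm_inner_le_norm _ _
    _ ≤ ‖N‖ * ‖x‖ * ‖x‖ := by
        have := N.le_opNorm x
        nlinarith [norm_nonneg x]
    _ = ‖N‖ := by rw [hx]; ring

/-- `ω(M²) ≤ ‖M*M + MM*‖ / 2`. -/
private lemma numRad_sq_le (M : H →L[ℂ] H) :
    numRad (M ^ 2) ≤ ‖adjoint M * M + M * adjoint M‖ / 2 := by
  refine numRad_le _ (by positivity) ?_
  intro x hx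
  have h := inner_sq_eq M x
  have hcs : ‖(inner ℂ (M x) ((adjoint M) x) : ℂ)‖ ≤ ‖M x‖ * ‖(adjoint M) x‖ :=
    norm_inner_le_norm _ _
  have hs := sum_sq_le_opNorm M hx
  rw [h]
  nlinarith [sq_nonneg (‖M x‖ - ‖(adjoint M) x‖), norm_nonneg (M x),
    norm_nonneg ((adjoint M) x)]

/-- Per-vector Abu-Omar–Kittaneh estimate. -/
private lemma key_pointwise (M : H →L[ℂ] H) {x : H} (hx : ‖x‖ = 1) :
    ‖(inner ℂ (M x) x : ℂ)‖ ^ 2 ≤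
      (‖M x‖ ^ 2 + ‖(adjoint M) x‖ ^ 2) / 4 + ‖(inner ℂ ((M ^ 2) x) x : ℂ)‖ / 2 := by
  set c : ℂ := inner ℂ (M x) x with hc
  by_cases hc0 : c = 0
  · have h0 : ‖c‖ ^ 2 = 0 := by rw [hc0]; simp
    rw [h0]
    positivity
  · set φ : ℂ := (‖c‖ : ℂ) / c with hφdef
    have hφc : φ * c = (‖c‖ : ℂ) := div_mul_cancel₀ _ hc0
    have hφn : ‖φ‖ = 1 := by
      rw [hφdef, norm_div, Complex.norm_real, norm_norm, div_self]
      simpa using hc0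
    set y : H := (starRingEnd ℂ φ) • M x + φ • ((adjoint M) x) with hy
    -- inner ℂ y x = 2‖c‖
    have hyx : (inner ℂ y x : ℂ) = 2 * (‖c‖ : ℂ) := by
      rw [hy, inner_add_left, inner_smul_left, inner_smul_left]
      have e1 : (inner ℂ ((adjoint M) x) x : ℂ) = inner ℂ x (M x) := adjoint_inner_left M x x
      have e2 : (inner ℂ x (M x) : ℂ) = starRingEnd ℂ c := by
        rw [hc, ← inner_conj_symm]
      rw [e1, e2, RingHomCompTriple.comp_apply, RingHom.id_apply, ← hc]
      have : φ * c + (starRingEnd ℂ) φ * (starRingEnd ℂ) c = (‖c‖ : ℂ) + (‖c‖ : ℂ) := by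
        rw [← map_mul, hφc]
        simp
      rw [this]; ring
    -- ‖y‖² bound
    have hyn : ‖y‖ ^ 2 ≤ ‖M x‖ ^ 2 + ‖(adjoint M) x‖ ^ 2
        + 2 * ‖(inner ℂ ((M ^ 2) x) x : ℂ)‖ := by
      have hsq := norm_add_sq (𝕜 := ℂ) ((starRingEnd ℂ φ) • M x) (φ • ((adjoint M) x))
      have hn1 : ‖(starRingEnd ℂ φ) • M x‖ = ‖M x‖ := by
        rw [norm_smul, RCLike.norm_conj, hφn, one_mul]
      have hn2 : ‖φ • ((adjoint M) x)‖ = ‖(adjoint M) x‖ := by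
        rw [norm_smul, hφn, one_mul]
      have hcross : (inner ℂ ((starRingEnd ℂ φ) • M x) (φ • ((adjoint M) x)) : ℂ)
          = φ ^ 2 * (inner ℂ ((M ^ 2) x) x : ℂ) := by
        rw [inner_smul_left, inner_smul_right, inner_sq_eq M x,
          RingHomCompTriple.comp_apply, RingHom.id_apply]
        ring
      have hre : ((inner ℂ ((starRingEnd ℂ φ) • M x) (φ • ((adjoint M) x)) : ℂ)).re
          ≤ ‖(inner ℂ ((M ^ 2) x) x : ℂ)‖ := by
        calc ((inner ℂ ((starRingEnd ℂ φ) • M x) (φ • ((adjoint M) x)) : ℂ)).re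
            ≤ ‖(inner ℂ ((starRingEnd ℂ φ) • M x) (φ • ((adjoint M) x)) : ℂ)‖ :=
              Complex.re_le_norm _
          _ = ‖φ ^ 2 * (inner ℂ ((M ^ 2) x) x : ℂ)‖ := by rw [hcross]
          _ = ‖(inner ℂ ((M ^ 2) x) x : ℂ)‖ := by
              rw [norm_mul, norm_pow, hφn]; ring
      rw [← hy] at hsq
      simp only [RCLike.re_to_complex] at hsq
      rw [hsq, hn1, hn2]
      nlinarith [hre]
    -- 2‖c‖ ≤ ‖y‖
    have h2c : 2 * ‖c‖ ≤ ‖y‖ := by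
      have h1 : (2 : ℝ) * ‖c‖ = ((inner ℂ y x : ℂ)).re := by
        rw [hyx]; push_cast; simp
      have h2 : ((inner ℂ y x : ℂ)).re ≤ ‖(inner ℂ y x : ℂ)‖ := Complex.re_le_norm _
      have h3 : ‖(inner ℂ y x : ℂ)‖ ≤ ‖y‖ * ‖x‖ := norm_inner_le_norm _ _
      rw [hx, mul_one] at h3
      linarith
    have hcn : (0 : ℝ) ≤ ‖c‖ := norm_nonneg _
    nlinarith [h2c, hyn, norm_nonneg y]

/-- `ω(M)² ≤ ‖M*M + MM*‖/4 + ω(M²)/2`. -/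
private lemma numRad_sq_key (M : H →L[ℂ] H) :
    numRad M ^ 2 ≤ ‖adjoint M * M + M * adjoint M‖ / 4 + numRad (M ^ 2) / 2 := by
  set R : ℝ := ‖adjoint M * M + M * adjoint M‖ / 4 + numRad (M ^ 2) / 2 with hR
  have hR0 : 0 ≤ R := by
    have := numRad_nonneg (M ^ 2)
    positivity
  have h : numRad M ≤ Real.sqrt R := by
    refine numRad_le _ (Real.sqrt_nonneg _) ?_
    intro x hx
    have hpt := key_pointwise M hx
    have hbd : ‖(inner ℂ (M x) x : ℂ)‖ ^ 2 ≤ R := by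
      have h1 := sum_sq_le_opNorm M hx
      have h2 := norm_inner_le_numRad (M ^ 2) hx
      rw [hR]
      linarith
    calc ‖(inner ℂ (M x) x : ℂ)‖ = Real.sqrt (‖(inner ℂ (M x) x : ℂ)‖ ^ 2) := by
          rw [Real.sqrt_sq (norm_nonneg _)]
      _ ≤ Real.sqrt R := Real.sqrt_le_sqrt hbd
  have := numRad_nonneg M
  nlinarith [Real.sq_sqrt hR0, Real.sqrt_nonneg R]

end AuxNumRad

/-- Corollary `MOBY-A2`: fourth-power numerical radius bound for a single operator
with parameters `α ∈ ℂ \ {0}` and `β ≥ 0`. -/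
theorem numRad_pow_four_bound {H : Type*}
    [NormedAddCommGroup H] [InnerProductSpace ℂ H] [CompleteSpace H]
    (M : H →L[ℂ] H) (α : ℂ) (hα : α ≠ 0) (β : ℝ) (hβ : 0 ≤ β) :
    numRad M ^ 4 ≤
      (2 * (β + 1) * max 1 (‖α - 1‖ ^ 2) + 2 * β) / (‖α‖ ^ 2 * (β + 1)) / 4
          * ‖adjoint M * M + M * adjoint M‖ ^ 2
        + 2 / (‖α‖ ^ 2 * (β + 1)) * numRad (M ^ 2) ^ 2 := by
  set w : ℝ := numRad M with hw
  set v : ℝ := numRad (M ^ 2) with hv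
  set u : ℝ := ‖adjoint M * M + M * adjoint M‖ with hu
  set a : ℝ := ‖α‖ ^ 2 with ha
  set m : ℝ := max 1 (‖α - 1‖ ^ 2) with hm
  have hm1 : (1 : ℝ) ≤ m := le_max_left _ _
  have hm2 : ‖α - 1‖ ^ 2 ≤ m := le_max_right _ _
  have ha0 : 0 < a := by
    rw [ha]
    have : 0 < ‖α‖ := norm_pos_iff.mpr hα
    positivity
  have haub : a ≤ 2 * m + 2 := by
    have htri : ‖α‖ ≤ ‖α - 1‖ + 1 := by
      calc ‖α‖ = ‖(α - 1) + 1‖ := by ring_nf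
        _ ≤ ‖α - 1‖ + ‖(1 : ℂ)‖ := norm_add_le _ _
        _ = ‖α - 1‖ + 1 := by simp
    have h0 : (0 : ℝ) ≤ ‖α - 1‖ := norm_nonneg _
    nlinarith [sq_nonneg (‖α - 1‖ - 1), norm_nonneg α]
  have hs : 0 < a * (β + 1) := by positivity
  have h1 : v ≤ u / 2 := numRad_sq_le M
  have h2 : w ^ 2 ≤ u / 4 + v / 2 := numRad_sq_key M
  have hwn : 0 ≤ w := numRad_nonneg M
  have hvn : 0 ≤ v := numRad_nonneg (M ^ 2)
  have hun : 0 ≤ u := norm_nonneg _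
  have h4 : w ^ 4 ≤ (u / 4 + v / 2) ^ 2 := by
    have := pow_le_pow_left₀ (sq_nonneg w) h2 2
    calc w ^ 4 = (w ^ 2) ^ 2 := by ring
      _ ≤ (u / 4 + v / 2) ^ 2 := this
  have hc2 : 0 ≤ (m + 1) * (β + 1) - 2 := by nlinarith
  have hu2v : 0 ≤ u - 2 * v := by linarith
  have hmain : a * (β + 1) * w ^ 4 ≤ ((β + 1) * m + β) / 2 * u ^ 2 + 2 * v ^ 2 := by
    have hstep : a * (β + 1) * w ^ 4 ≤ (2 * m + 2) * (β + 1) * (u / 4 + v / 2) ^ 2 := by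
      nlinarith [mul_le_mul_of_nonneg_left h4 hs.le, sq_nonneg (u / 4 + v / 2),
        mul_nonneg (sub_nonneg.mpr haub) (mul_nonneg (by linarith : (0:ℝ) ≤ β + 1)
          (sq_nonneg (u / 4 + v / 2)))]
    nlinarith [hstep, sq_nonneg (u - 2 * v),
      mul_nonneg (mul_nonneg hc2 hun) hu2v,
      mul_nonneg (mul_nonneg hc2 hvn) hu2v]
  have hrw : (2 * (β + 1) * m + 2 * β) / (a * (β + 1)) / 4 * u ^ 2
      + 2 / (a * (β + 1)) * v ^ 2
      = (((β + 1) * m + β) / 2 * u ^ 2 + 2 * v ^ 2) / (a * (β + 1)) := by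
    ring
  rw [hrw, le_div_iff₀ hs]
  linarith [hmain]
end
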